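/- Let E₆^E = {(x,y,z) ∈ E³ : x ≡ y ≡ z mod θ} with the standard Hermitian form. Then θ(E₆^E)' = {(x,y,z) ∈ E³ : x + y + z ≡ 0 mod θ}, and θ(E₆^E)'/E₆^E ≅ 𝔽₃. -/

import Mathlib

noncomputable section

def ω : ℂ := -1/2 + (Real.sqrt 3 / 2) * Complex.I
def θ : ℂ := ω - (starRingEnd ℂ) ω
def Eis : Subring ℂ := Subring.closure {ω}

/-- The standard Hermitian form on `ℂ³`. -/
def herm3 (x y : Fin 3 → ℂ) : ℂ := ∑ i, x i * (starRingEnd ℂ) (y i)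

/-- `E₆^E = {(x,y,z) ∈ Eis³ : x ≡ y ≡ z mod θ}`. -/
def E6 : Set (Fin 3 → ℂ) :=
  {x | (∀ i, x i ∈ Eis) ∧ (∃ e ∈ Eis, x 0 - x 1 = θ * e) ∧ ∃ e ∈ Eis, x 1 - x 2 = θ * e}

/-- The dual lattice of `E₆^E`. -/
def E6dual : Set (Fin 3 → ℂ) := {v | ∀ x ∈ E6, herm3 x v ∈ Eis}

/-- `θ·(E₆^E)'`. -/
def thetaE6dual : Set (Fin 3 → ℂ) := {z | ∃ v ∈ E6dual, z = θ • v}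

lemma omega_re : ω.re = -1/2 := by simp [ω]
lemma omega_im : ω.im = Real.sqrt 3 / 2 := by simp [ω]

lemma conj_omega : (starRingEnd ℂ) ω = -1 - ω := by
  apply Complex.ext <;> simp [omega_re, omega_im]
  norm_num

lemma theta_eq : θ = 2*ω + 1 := by rw [θ, conj_omega]; ring

lemma omega_sq : ω^2 = -1 - ω := by
  have h3 : (Real.sqrt 3)^2 = 3 := Real.sq_sqrt (by norm_num)
  apply Complex.ext <;>
    simp [pow_two, Complex.mul_re, Complex.mul_im, omega_re, omega_im] <;> nlinarith [h3]

lemma theta_sq : θ^2 = -3 := by rw [theta_eq]; linear_combination 4*omega_sq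

lemma conj_theta : (starRingEnd ℂ) θ = -θ := by
  rw [θ, map_sub, Complex.conj_conj]; ring

lemma theta_ne : θ ≠ 0 := by
  intro h
  have : θ.im = 0 := by rw [h]; simp
  rw [θ] at this
  simp only [Complex.sub_im, Complex.conj_im, omega_im] at this
  have h2 := Real.sqrt_pos.mpr (show (0:ℝ) < 3 by norm_num)
  linarith

lemma rep_unique {a b a' b' : ℤ} (h : (a:ℂ) + b * ω = a' + b' * ω) : a = a' ∧ b = b' := by
  have hs : Real.sqrt 3 ≠ 0 := ne_of_gt (Real.sqrt_pos.mpr (by norm_num))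
  have him := congrArg Complex.im h
  have hre := congrArg Complex.re h
  simp only [Complex.add_im, Complex.add_re, Complex.mul_im, Complex.mul_re, omega_re, omega_im,
    Complex.intCast_re, Complex.intCast_im] at him hre
  have hb : (b:ℝ) = b' := by
    field_simp at him
    have h' : (b:ℝ) * Real.sqrt 3 = b' * Real.sqrt 3 := by push_cast at him; linarith
    exact mul_right_cancel₀ hs h'
  have : (b:ℤ) = b' := by exact_mod_cast hb
  subst this
  refine ⟨?_, rfl⟩
  have : (a:ℝ) = a' := by linarith
  exact_mod_cast this

lemma mem_Eis_iff {x : ℂ} : x ∈ Eis ↔ ∃ a b : ℤ, x = a + b * ω := by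
  constructor
  · intro hx
    induction hx using Subring.closure_induction with
    | mem y hy => rcases hy with rfl; exact ⟨0, 1, by push_cast; ring⟩
    | zero => exact ⟨0, 0, by push_cast; ring⟩
    | one => exact ⟨1, 0, by push_cast; ring⟩
    | add x y _ _ hx hy =>
        obtain ⟨a, b, rfl⟩ := hx; obtain ⟨c, d, rfl⟩ := hy
        exact ⟨a + c, b + d, by push_cast; ring⟩
    | neg x _ hx =>
        obtain ⟨a, b, rfl⟩ := hx
        exact ⟨-a, -b, by push_cast; ring⟩
    | mul x y _ _ hx hy =>
        obtain ⟨a, b, rfl⟩ := hx; obtain ⟨c, d, rfl⟩ := hy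
        exact ⟨a*c - b*d, a*d + b*c - b*d, by push_cast; linear_combination (b:ℂ)*d*omega_sq⟩
  · rintro ⟨a, b, rfl⟩
    exact Subring.add_mem _ (intCast_mem _ a)
      (Subring.mul_mem _ (intCast_mem _ b) (Subring.subset_closure rfl))

lemma theta_mem : θ ∈ Eis := mem_Eis_iff.mpr ⟨1, 2, by rw [theta_eq]; push_cast; ring⟩

lemma conj_mem {x : ℂ} (hx : x ∈ Eis) : (starRingEnd ℂ) x ∈ Eis := by
  obtain ⟨a, b, rfl⟩ := mem_Eis_iff.mp hx
  refine mem_Eis_iff.mpr ⟨a - b, -b, ?_⟩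
  rw [map_add, map_mul, conj_omega]
  push_cast
  simp
  ring

lemma theta_mul (c d : ℤ) : θ * ((c:ℂ) + d*ω) = ((c - 2*d : ℤ):ℂ) + ((2*c - d : ℤ):ℂ)*ω := by
  rw [theta_eq]; push_cast; linear_combination 2*(d:ℂ)*omega_sq

lemma dvd_lemma (a b : ℤ) : (∃ e ∈ Eis, (a:ℂ) + b*ω = θ*e) ↔ (3:ℤ) ∣ (a+b) := by
  constructor
  · rintro ⟨e, he, heq⟩
    obtain ⟨c, d, rfl⟩ := mem_Eis_iff.mp he
    rw [theta_mul] at heq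
    obtain ⟨h1, h2⟩ := rep_unique heq
    exact ⟨c - d, by omega⟩
  · rintro ⟨k, hk⟩
    refine ⟨(b - k : ℤ) + (b - 2*k : ℤ)*ω, mem_Eis_iff.mpr ⟨b - k, b - 2*k, rfl⟩, ?_⟩
    rw [theta_mul]
    push_cast
    have ha : (a:ℂ) = 3*k - b := by push_cast [show a = 3*k - b by omega]; ring
    rw [ha]; ring

open scoped Classical in
def coef (x : ℂ) : ℤ × ℤ :=
  if h : ∃ p : ℤ × ℤ, x = p.1 + p.2 * ω then h.choose else 0

lemma coef_spec (a b : ℤ) : coef ((a:ℂ) + b*ω) = (a, b) := by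
  have h : ∃ p : ℤ × ℤ, ((a:ℂ) + b*ω) = p.1 + p.2 * ω := ⟨(a, b), rfl⟩
  rw [coef]
  rw [dif_pos h]
  obtain ⟨h1, h2⟩ := rep_unique (h.choose_spec.symm)
  exact Prod.ext h1 h2

def ψ (x : ℂ) : ZMod 3 := ((coef x).1 + (coef x).2 : ℤ)

lemma psi_spec (a b : ℤ) : ψ ((a:ℂ) + b*ω) = ((a + b : ℤ) : ZMod 3) := by
  rw [ψ, coef_spec]





def A (i : Fin 3) : Fin 3 → ℂ := fun j => if j = i then θ else 0

lemma hA (i : Fin 3) (v : Fin 3 → ℂ) : herm3 (A i) v = θ * (starRingEnd ℂ) (v i) := by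
  rw [herm3, Fin.sum_univ_three]; fin_cases i <;> simp [A]

lemma A_mem (i : Fin 3) : A i ∈ E6 := by
  refine ⟨fun j => ?_, ?_, ?_⟩
  · by_cases h : j = i <;> simp [A, h, theta_mem, Subring.zero_mem]
  · fin_cases i
    · exact ⟨1, Subring.one_mem _, by simp [A]⟩
    · exact ⟨-1, Subring.neg_mem _ (Subring.one_mem _), by simp [A]⟩
    · exact ⟨0, Subring.zero_mem _, by simp [A]⟩
  · fin_cases i
    · exact ⟨0, Subring.zero_mem _, by simp [A]⟩
    · exact ⟨1, Subring.one_mem _, by simp [A]⟩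
    · exact ⟨-1, Subring.neg_mem _ (Subring.one_mem _), by simp [A]⟩

def B : Fin 3 → ℂ := fun _ => 1

lemma hB (v : Fin 3 → ℂ) :
    herm3 B v = (starRingEnd ℂ) (v 0) + (starRingEnd ℂ) (v 1) + (starRingEnd ℂ) (v 2) := by
  rw [herm3, Fin.sum_univ_three]; simp [B]

lemma B_mem : B ∈ E6 :=
  ⟨fun _ => Subring.one_mem _, ⟨0, Subring.zero_mem _, by simp [B]⟩,
   ⟨0, Subring.zero_mem _, by simp [B]⟩⟩

lemma main1 : thetaE6dual =
    {x | (∀ i, x i ∈ Eis) ∧ ∃ e ∈ Eis, x 0 + x 1 + x 2 = θ * e} := by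
  ext z
  constructor
  · rintro ⟨v, hv, rfl⟩
    constructor
    · intro i
      have h1 : θ * (starRingEnd ℂ) (v i) ∈ Eis := by rw [← hA i v]; exact hv _ (A_mem i)
      have h2 : (θ • v) i = -((starRingEnd ℂ) (θ * (starRingEnd ℂ) (v i))) := by
        rw [map_mul, conj_theta, Complex.conj_conj]; simp
      rw [h2]
      exact Subring.neg_mem _ (conj_mem h1)
    · have h1 := hv _ B_mem
      rw [hB] at h1
      refine ⟨(starRingEnd ℂ) ((starRingEnd ℂ) (v 0) + (starRingEnd ℂ) (v 1) + (starRingEnd ℂ) (v 2)), conj_mem h1, ?_⟩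
      simp only [Pi.smul_apply, smul_eq_mul, map_add, Complex.conj_conj]
      ring
  · rintro ⟨hz, e, he, hsum⟩
    refine ⟨θ⁻¹ • z, ?_, by rw [smul_smul, mul_inv_cancel₀ theta_ne, one_smul]⟩
    rintro x ⟨hx, ⟨a, ha, hxa⟩, ⟨b, hb, hxb⟩⟩
    have key : herm3 x (θ⁻¹ • z) =
        x 2 * (starRingEnd ℂ) e - (a + b) * (starRingEnd ℂ) (z 0) - b * (starRingEnd ℂ) (z 1) := by
      have csum : (starRingEnd ℂ) (z 0) + (starRingEnd ℂ) (z 1) + (starRingEnd ℂ) (z 2)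
          = -θ * (starRingEnd ℂ) e := by
        have := congrArg (starRingEnd ℂ) hsum
        rw [map_add, map_add, map_mul, conj_theta] at this
        exact this
      have hinv : θ * θ⁻¹ = 1 := mul_inv_cancel₀ theta_ne
      rw [herm3, Fin.sum_univ_three]
      simp only [Pi.smul_apply, smul_eq_mul, map_mul, map_inv₀, conj_theta]
      linear_combination (-(θ⁻¹) * (starRingEnd ℂ) (z 0)) * hxa
        + (-(θ⁻¹) * ((starRingEnd ℂ) (z 0) + (starRingEnd ℂ) (z 1))) * hxb
        + (-(θ⁻¹) * x 2) * csum
        + (x 2 * (starRingEnd ℂ) e - (a+b)*(starRingEnd ℂ) (z 0) - b*(starRingEnd ℂ) (z 1)) * hinv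
    rw [key]
    exact Subring.sub_mem _ (Subring.sub_mem _ (Subring.mul_mem _ (hx 2) (conj_mem he))
      (Subring.mul_mem _ (Subring.add_mem _ ha hb) (conj_mem (hz 0))))
      (Subring.mul_mem _ hb (conj_mem (hz 1)))

lemma psi_zero_iff {x : ℂ} (hx : x ∈ Eis) : ψ x = 0 ↔ ∃ e ∈ Eis, x = θ * e := by
  obtain ⟨a, b, rfl⟩ := mem_Eis_iff.mp hx
  rw [psi_spec, ZMod.intCast_zmod_eq_zero_iff_dvd, dvd_lemma]
  norm_num

/-- `θ(E₆^E)' = {(x,y,z) ∈ Eis³ : x+y+z ≡ 0 mod θ}` and `θ(E₆^E)'/E₆^E ≅ 𝔽₃`. -/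
theorem stmt8 :
    thetaE6dual = {x | (∀ i, x i ∈ Eis) ∧ ∃ e ∈ Eis, x 0 + x 1 + x 2 = θ * e} ∧
    ∃ f : (Fin 3 → ℂ) → ZMod 3,
      (∀ v ∈ thetaE6dual, ∀ w ∈ thetaE6dual, f (v + w) = f v + f w) ∧
      (∀ v ∈ thetaE6dual, (f v = 0 ↔ v ∈ E6)) ∧
      (∀ c : ZMod 3, ∃ v ∈ thetaE6dual, f v = c) := by
  rw [main1]
  refine ⟨rfl, fun z => ψ (z 0 - z 1), ?_, ?_, ?_⟩
  · rintro v ⟨hv, -⟩ w ⟨hw, -⟩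
    obtain ⟨a, b, hab⟩ := mem_Eis_iff.mp (Subring.sub_mem _ (hv 0) (hv 1))
    obtain ⟨c, d, hcd⟩ := mem_Eis_iff.mp (Subring.sub_mem _ (hw 0) (hw 1))
    have h : (v + w) 0 - (v + w) 1 = ((a + c : ℤ):ℂ) + ((b + d : ℤ):ℂ) * ω := by
      simp only [Pi.add_apply]; push_cast; linear_combination hab + hcd
    show ψ ((v + w) 0 - (v + w) 1) = ψ (v 0 - v 1) + ψ (w 0 - w 1)
    rw [h, hab, hcd, psi_spec, psi_spec, psi_spec]
    push_cast
    ring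
  · rintro v ⟨hv, e, he, hsum⟩
    rw [psi_zero_iff (Subring.sub_mem _ (hv 0) (hv 1))]
    constructor
    · rintro ⟨e', he', h01⟩
      refine ⟨hv, ⟨e', he', h01⟩, ?_⟩
      refine ⟨-θ * v 1 - e + e', ?_, ?_⟩
      · exact Subring.add_mem _ (Subring.sub_mem _
          (Subring.mul_mem _ (Subring.neg_mem _ theta_mem) (hv 1)) he) he'
      · have h3 : (3:ℂ) = -θ^2 := by rw [theta_sq]; ring
        linear_combination h01 - hsum + (v 1) * h3
    · rintro ⟨-, ⟨e', he', h01⟩, -⟩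
      exact ⟨e', he', h01⟩
  · intro c
    refine ⟨![-(c.val:ℂ), (c.val:ℂ), 0], ⟨?_, 0, Subring.zero_mem _, by simp⟩, ?_⟩
    · intro i
      fin_cases i
      · show -(c.val:ℂ) ∈ Eis
        exact Subring.neg_mem _ (mem_Eis_iff.mpr ⟨c.val, 0, by push_cast; ring⟩)
      · show (c.val:ℂ) ∈ Eis
        exact mem_Eis_iff.mpr ⟨c.val, 0, by push_cast; ring⟩
      · exact Subring.zero_mem _
    · have h : (![-(c.val:ℂ), (c.val:ℂ), 0] : Fin 3 → ℂ) 0 - ![-(c.val:ℂ), (c.val:ℂ), 0] 1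
          = ((-2 * c.val : ℤ):ℂ) + ((0:ℤ):ℂ) * ω := by push_cast; simp; ring
      show ψ (![-(c.val:ℂ), (c.val:ℂ), 0] 0 - ![-(c.val:ℂ), (c.val:ℂ), 0] 1) = c
      rw [h, psi_spec]
      have hc : ((c.val : ℤ) : ZMod 3) = c := by
        push_cast
        simp [ZMod.natCast_val, ZMod.cast_id]
      rw [show ((-2 * (c.val:ℤ) + 0 : ℤ) : ZMod 3) = (-2 : ZMod 3) * ((c.val : ℤ) : ZMod 3) by push_cast; ring, hc]
      rw [show (-2 : ZMod 3) = 1 by decide, one_mul]
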